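/- Fix real parameters σ > 0, g > 0, η ≠ 0, t ≥ 0 and Q₀ ∈ ℝ; set β = 2σ²/g. For γ > 0 set ω(γ) = σγη and define D_γ(t) = (1/(2γ²))·(t·v_γ(t) − sinh(ω(γ)t)/ω(γ) − 2β(cosh(ω(γ)t) − 1)/ω(γ)²)/v_γ(t) − σ²ηQ₀·(cosh(ω(γ)t) − 1)/(ω(γ)²·v_γ(t)) + (σ²Q₀²/2)·sinh(ω(γ)t)/(ω(γ)·v_γ(t)) + (γ²η²P₀²/2)·sinh(ω(γ)t)/(ω(γ)·u_γ(t)), where u_γ(t) = cosh(ω(γ)t) + (ω(γ)/β)sinh(ω(γ)t) and v_γ(t) = cosh(ω(γ)t) + (β/ω(γ))sinh(ω(γ)t), and P₀ ∈ ℝ. Then D_γ(t) converges, as γ → 0 through positive values, to (σ²/(1 + βt))·(t³/6 + σ²t⁴/(12g))·η² − (Q₀σ²/2)·(t²/(1 + βt))·η + (Q₀²σ²/2)·(t/(1 + βt)). -/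

import Mathlib

open Topology Filter



lemma stmt8_aux1 : Tendsto (fun x : ℝ => Real.sinh x / x) (𝓝[≠] 0) (𝓝 1) := by
  have h := (Real.hasDerivAt_sinh 0)
  rw [Real.cosh_zero, hasDerivAt_iff_tendsto_slope] at h
  refine h.congr fun x => ?_
  simp [slope, Real.sinh_zero, div_eq_inv_mul]

lemma stmt8_aux2 : Tendsto (fun x : ℝ => (Real.cosh x - 1) / x ^ 2) (𝓝[≠] 0) (𝓝 (1/2)) := by
  apply HasDerivAt.lhopital_zero_nhdsNE (f' := fun x => Real.sinh x) (g' := fun x => 2 * x)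
  · filter_upwards with x
    simpa using (Real.hasDerivAt_cosh x).sub_const 1
  · filter_upwards with x
    simpa [mul_comm] using (hasDerivAt_pow 2 x)
  · filter_upwards [self_mem_nhdsWithin] with x hx
    simpa using hx
  · have : Tendsto (fun x : ℝ => Real.cosh x - 1) (𝓝 0) (𝓝 (Real.cosh 0 - 1)) :=
      (Real.continuous_cosh.sub continuous_const).tendsto 0
    simpa using this.mono_left nhdsWithin_le_nhds
  · have : Tendsto (fun x : ℝ => x ^ 2) (𝓝 (0:ℝ)) (𝓝 (0 ^ 2)) := (continuous_pow 2).tendsto 0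
    simpa using this.mono_left nhdsWithin_le_nhds
  · have : Tendsto (fun x : ℝ => Real.sinh x / x * (1/2)) (𝓝[≠] 0) (𝓝 (1 * (1/2))) :=
      stmt8_aux1.mul_const _
    rw [one_mul] at this
    refine this.congr' ?_
    filter_upwards [self_mem_nhdsWithin] with x hx
    have hx : x ≠ 0 := hx
    field_simp
    try ring
    try exact Or.inl trivial

lemma stmt8_aux3 : Tendsto (fun x : ℝ => (x * Real.cosh x - Real.sinh x) / x ^ 3) (𝓝[≠] 0) (𝓝 (1/3)) := by
  apply HasDerivAt.lhopital_zero_nhdsNE (f' := fun x => x * Real.sinh x) (g' := fun x => 3 * x ^ 2)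
  · filter_upwards with x
    have h1 : HasDerivAt (fun x : ℝ => x * Real.cosh x) (1 * Real.cosh x + x * Real.sinh x) x :=
      (hasDerivAt_id x).mul (Real.hasDerivAt_cosh x)
    have := h1.sub (Real.hasDerivAt_sinh x)
    exact this.congr_deriv (by ring)
  · filter_upwards with x
    simpa [mul_comm] using (hasDerivAt_pow 3 x)
  · filter_upwards [self_mem_nhdsWithin] with x hx
    have hx : x ≠ 0 := hx
    positivity
  · have : Tendsto (fun x : ℝ => x * Real.cosh x - Real.sinh x) (𝓝 0)
        (𝓝 (0 * Real.cosh 0 - Real.sinh 0)) :=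
      ((continuous_id.mul Real.continuous_cosh).sub Real.continuous_sinh).tendsto 0
    simpa using this.mono_left nhdsWithin_le_nhds
  · have : Tendsto (fun x : ℝ => x ^ 3) (𝓝 (0:ℝ)) (𝓝 (0 ^ 3)) := (continuous_pow 3).tendsto 0
    simpa using this.mono_left nhdsWithin_le_nhds
  · have : Tendsto (fun x : ℝ => Real.sinh x / x * (1/3)) (𝓝[≠] 0) (𝓝 (1 * (1/3))) :=
      stmt8_aux1.mul_const _
    rw [one_mul] at this
    refine this.congr' ?_
    filter_upwards [self_mem_nhdsWithin] with x hx
    have hx : x ≠ 0 := hx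
    field_simp
    try ring
    try exact Or.inl trivial

lemma stmt8_aux4 : Tendsto (fun x : ℝ => (x * Real.sinh x - 2 * (Real.cosh x - 1)) / x ^ 4)
    (𝓝[≠] 0) (𝓝 (1/12)) := by
  apply HasDerivAt.lhopital_zero_nhdsNE
    (f' := fun x => x * Real.cosh x - Real.sinh x) (g' := fun x => 4 * x ^ 3)
  · filter_upwards with x
    have h1 : HasDerivAt (fun x : ℝ => x * Real.sinh x) (1 * Real.sinh x + x * Real.cosh x) x :=
      (hasDerivAt_id x).mul (Real.hasDerivAt_sinh x)
    have h2 : HasDerivAt (fun x : ℝ => 2 * (Real.cosh x - 1)) (2 * Real.sinh x) x := by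
      simpa using ((Real.hasDerivAt_cosh x).sub_const 1).const_mul 2
    have := h1.sub h2
    exact this.congr_deriv (by ring)
  · filter_upwards with x
    simpa [mul_comm] using (hasDerivAt_pow 4 x)
  · filter_upwards [self_mem_nhdsWithin] with x hx
    have hx : x ≠ 0 := hx
    intro h
    apply hx
    have := mul_eq_zero.mp h
    rcases this with h | h
    · norm_num at h
    · exact pow_eq_zero_iff (by norm_num) |>.mp h
  · have : Tendsto (fun x : ℝ => x * Real.sinh x - 2 * (Real.cosh x - 1)) (𝓝 0)
        (𝓝 (0 * Real.sinh 0 - 2 * (Real.cosh 0 - 1))) :=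
      ((continuous_id.mul Real.continuous_sinh).sub
        (continuous_const.mul (Real.continuous_cosh.sub continuous_const))).tendsto 0
    simpa using this.mono_left nhdsWithin_le_nhds
  · have : Tendsto (fun x : ℝ => x ^ 4) (𝓝 (0:ℝ)) (𝓝 (0 ^ 4)) := (continuous_pow 4).tendsto 0
    simpa using this.mono_left nhdsWithin_le_nhds
  · have : Tendsto (fun x : ℝ => (x * Real.cosh x - Real.sinh x) / x ^ 3 * (1/4))
        (𝓝[≠] 0) (𝓝 (1/3 * (1/4))) := stmt8_aux3.mul_const _
    have h13 : (1:ℝ)/3 * (1/4) = 1/12 := by norm_num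
    rw [h13] at this
    refine this.congr' ?_
    filter_upwards [self_mem_nhdsWithin] with x hx
    have hx : x ≠ 0 := hx
    field_simp
    try ring
    try exact Or.inl trivial


set_option maxHeartbeats 1000000 in
/-- The damping exponent `D_γ(t)` of the non-Gaussian channel converges,
as the dephasing parameter `γ → 0⁺`, to the damping exponent of the Gaussian channel:
`lim_{γ→0⁺} D_γ(t) = (σ²/(1+βt))(t³/6 + σ²t⁴/(12g))η² − (Q₀σ²/2)(t²/(1+βt))η
  + (Q₀²σ²/2)(t/(1+βt))`. -/
theorem stmt8 (σ g η t Q₀ P₀ : ℝ) (hσ : 0 < σ) (hg : 0 < g) (hη : η ≠ 0) (ht : 0 ≤ t)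
    (β : ℝ) (hβ : β = 2 * σ ^ 2 / g)
    (ωf uf vf Df : ℝ → ℝ)
    (hωf : ∀ γ, ωf γ = σ * γ * η)
    (huf : ∀ γ > 0, uf γ = Real.cosh (ωf γ * t) + (ωf γ / β) * Real.sinh (ωf γ * t))
    (hvf : ∀ γ > 0, vf γ = Real.cosh (ωf γ * t) + (β / ωf γ) * Real.sinh (ωf γ * t))
    (hDf : ∀ γ > 0, Df γ =
      (1 / (2 * γ ^ 2)) *
          ((t * vf γ - Real.sinh (ωf γ * t) / ωf γ
              - 2 * β * (Real.cosh (ωf γ * t) - 1) / (ωf γ) ^ 2) / vf γ)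
        - σ ^ 2 * η * Q₀ * (Real.cosh (ωf γ * t) - 1) / ((ωf γ) ^ 2 * vf γ)
        + (σ ^ 2 * Q₀ ^ 2 / 2) * Real.sinh (ωf γ * t) / (ωf γ * vf γ)
        + (γ ^ 2 * η ^ 2 * P₀ ^ 2 / 2) * Real.sinh (ωf γ * t) / (ωf γ * uf γ)) :
    Tendsto Df (𝓝[>] (0:ℝ))
      (𝓝 (σ ^ 2 / (1 + β * t) * (t ^ 3 / 6 + σ ^ 2 * t ^ 4 / (12 * g)) * η ^ 2
        - Q₀ * σ ^ 2 / 2 * (t ^ 2 / (1 + β * t)) * η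
        + Q₀ ^ 2 * σ ^ 2 / 2 * (t / (1 + β * t)))) := by
  have hσ' : σ ≠ 0 := ne_of_gt hσ
  have hg' : g ≠ 0 := ne_of_gt hg
  have hβ0 : 0 < β := by rw [hβ]; positivity
  have hβ' : β ≠ 0 := ne_of_gt hβ0
  rcases ht.eq_or_lt with h0 | ht0
  · -- case t = 0
    subst h0
    have heq : (fun _ : ℝ => (0:ℝ)) =ᶠ[𝓝[>] (0:ℝ)] Df := by
      filter_upwards [self_mem_nhdsWithin] with γ hγ
      rw [hDf γ hγ]
      simp
    have h0' : Tendsto Df (𝓝[>] (0:ℝ)) (𝓝 0) := tendsto_const_nhds.congr' heq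
    convert h0' using 2
    norm_num
  · -- case t > 0
    have ht' : t ≠ 0 := ne_of_gt ht0
    have hbt : (1:ℝ) + β * t ≠ 0 := by positivity
    set G : ℝ → ℝ := fun x =>
      (σ^2*η^2*t^2/2) * ((t * ((x*Real.cosh x - Real.sinh x)/x^3)
          + β*t^2 * ((x*Real.sinh x - 2*(Real.cosh x - 1))/x^4))
        / (Real.cosh x + β*t*(Real.sinh x/x)))
      - σ^2*η*Q₀*t^2 * (((Real.cosh x - 1)/x^2) / (Real.cosh x + β*t*(Real.sinh x/x)))
      + (σ^2*Q₀^2/2*t) * ((Real.sinh x/x) / (Real.cosh x + β*t*(Real.sinh x/x)))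
      + (η^2*P₀^2*t/(2*(σ*η*t)^2)) * (x^2*(Real.sinh x/x)
          / (Real.cosh x + (x^2/(β*t))*(Real.sinh x/x))) with hGdef
    -- the map γ ↦ σηtγ
    have hmap : Tendsto (fun γ : ℝ => σ*η*t*γ) (𝓝[>] (0:ℝ)) (𝓝[≠] (0:ℝ)) := by
      rw [tendsto_nhdsWithin_iff]
      constructor
      · have h1 : Tendsto (fun γ : ℝ => σ*η*t*γ) (𝓝 0) (𝓝 (σ*η*t*0)) :=
          (continuous_const.mul continuous_id).tendsto 0
        rw [mul_zero] at h1
        exact h1.mono_left nhdsWithin_le_nhds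
      · filter_upwards [self_mem_nhdsWithin] with γ hγ
        have hγ' : γ ≠ 0 := ne_of_gt hγ
        have : σ*η*t*γ ≠ 0 := by
          exact mul_ne_zero (mul_ne_zero (mul_ne_zero hσ' hη) ht') hγ'
        exact this
    -- continuity facts
    have hcosh : Tendsto Real.cosh (𝓝[≠] (0:ℝ)) (𝓝 1) := by
      have := Real.continuous_cosh.tendsto 0
      rw [Real.cosh_zero] at this
      exact this.mono_left nhdsWithin_le_nhds
    have hV : Tendsto (fun x : ℝ => Real.cosh x + β*t*(Real.sinh x/x)) (𝓝[≠] (0:ℝ))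
        (𝓝 (1 + β*t)) := by
      have h2 : Tendsto (fun x : ℝ => β*t*(Real.sinh x/x)) (𝓝[≠] (0:ℝ)) (𝓝 (β*t*1)) :=
        stmt8_aux1.const_mul (β*t)
      rw [mul_one] at h2
      exact hcosh.add h2
    have hU : Tendsto (fun x : ℝ => Real.cosh x + (x^2/(β*t))*(Real.sinh x/x)) (𝓝[≠] (0:ℝ))
        (𝓝 1) := by
      have hx2 : Tendsto (fun x : ℝ => x^2/(β*t)) (𝓝[≠] (0:ℝ)) (𝓝 (0/(β*t))) := by
        have : Tendsto (fun x : ℝ => x^2) (𝓝 (0:ℝ)) (𝓝 ((0:ℝ)^2)) := (continuous_pow 2).tendsto 0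
        rw [show ((0:ℝ)^2) = 0 by norm_num] at this
        exact (this.mono_left nhdsWithin_le_nhds).div_const _
      rw [zero_div] at hx2
      have h2 := hx2.mul stmt8_aux1
      rw [zero_mul] at h2
      have := hcosh.add h2
      rwa [add_zero] at this
    -- limit of G
    have hlim : Tendsto G (𝓝[≠] (0:ℝ))
        (𝓝 ((σ^2*η^2*t^2/2) * ((t * (1/3) + β*t^2 * (1/12)) / (1 + β*t))
          - σ^2*η*Q₀*t^2 * ((1/2) / (1 + β*t))
          + (σ^2*Q₀^2/2*t) * (1 / (1 + β*t))
          + (η^2*P₀^2*t/(2*(σ*η*t)^2)) * (0 / 1))) := by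
      rw [hGdef]
      refine Tendsto.add (Tendsto.add (Tendsto.sub ?_ ?_) ?_) ?_
      · exact (((stmt8_aux3.const_mul t).add (stmt8_aux4.const_mul (β*t^2))).div hV hbt).const_mul _
      · exact ((stmt8_aux2.div hV hbt)).const_mul _
      · exact ((stmt8_aux1.div hV hbt)).const_mul _
      · have hx2 : Tendsto (fun x : ℝ => x^2*(Real.sinh x/x)) (𝓝[≠] (0:ℝ)) (𝓝 (0*1)) := by
          have h2 : Tendsto (fun x : ℝ => x^2) (𝓝[≠] (0:ℝ)) (𝓝 0) := by
            have : Tendsto (fun x : ℝ => x^2) (𝓝 (0:ℝ)) (𝓝 ((0:ℝ)^2)) :=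
              (continuous_pow 2).tendsto 0
            rw [show ((0:ℝ)^2) = 0 by norm_num] at this
            exact this.mono_left nhdsWithin_le_nhds
          exact h2.mul stmt8_aux1
        rw [zero_mul] at hx2
        exact ((hx2.div hU one_ne_zero)).const_mul _
    -- pointwise equality
    have hEq : (fun γ : ℝ => G (σ*η*t*γ)) =ᶠ[𝓝[>] (0:ℝ)] Df := by
      filter_upwards [self_mem_nhdsWithin] with γ hγ
      have hγ' : γ ≠ 0 := ne_of_gt hγ
      have hx : σ*η*t*γ ≠ 0 := mul_ne_zero (mul_ne_zero (mul_ne_zero hσ' hη) ht') hγ'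
      have hω : σ*γ*η ≠ 0 := mul_ne_zero (mul_ne_zero hσ' hγ') hη
      rw [hDf γ hγ, hvf γ hγ, huf γ hγ, hωf γ]
      have hmul : σ*γ*η*t = σ*η*t*γ := by ring
      rw [hmul]
      simp only [hGdef]
      have hVd : β/(σ*γ*η) * Real.sinh (σ*η*t*γ)
          = β*t*(Real.sinh (σ*η*t*γ)/(σ*η*t*γ)) := by
        field_simp
      have hUd : σ*γ*η/β * Real.sinh (σ*η*t*γ)
          = ((σ*η*t*γ)^2/(β*t)) * (Real.sinh (σ*η*t*γ)/(σ*η*t*γ)) := by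
        field_simp
      rw [hVd, hUd]
      set sh := Real.sinh (σ*η*t*γ) with hsh
      set ch := Real.cosh (σ*η*t*γ) with hch
      simp only [div_mul_eq_div_div, ← mul_div_assoc]
      congr 1
      · congr 1
        · congr 1
          · -- term 1 numerators
            congr 1
            field_simp
            ring
          · -- term 2 numerators
            congr 1
            field_simp
        · -- term 3 numerators
          congr 1
          field_simp
      · -- term 4 numerators
        congr 1
        field_simp
    have hfinal := (hlim.comp hmap).congr' hEq
    convert hfinal using 2
    rw [hβ]
    have h1 : (1:ℝ) + 2*σ^2/g*t ≠ 0 := by positivity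
    field_simp
    ring
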